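/- arXiv:2012.15765 — 2 statements merged into one kernel-verified Lean document; each statement's English description precedes it below -/
import Mathlib

section
/- If X₁ and X₂ are varieties over a field k of characteristic 0 and the product X₁ × X₂ is pseudo-mordellic (i.e. contains a nonempty open subset U such that U(K) is finite for every finitely generated field extension K/k), and X₁ × X₂ has a k-rational point lying in such a mordellic open subset, then X₁ is pseudo-mordellic. -/
open AlgebraicGeometry CategoryTheory Limits

universe u

noncomputable section

/-- A finitely generated field extension. -/
def FinGenExt (k K : Type u) [Field k] [Field K] [Algebra k K] : Prop :=
  (⊤ : IntermediateField k K).FG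

/-- The set of `K`-points of a scheme `X` over `k`, i.e. morphisms
`Spec K ⟶ X` lying over `Spec K ⟶ Spec k`. -/
def kPoints {k : Type u} [Field k] (K : Type u) [Field K] [Algebra k K]
    {X : Scheme.{u}} (f : X ⟶ Spec (CommRingCat.of k)) :
    Set (Spec (CommRingCat.of K) ⟶ X) :=
  {p | p ≫ f = Spec.map (CommRingCat.ofHom (algebraMap k K))}

/-- A scheme `X` over a field `k` is mordellic if `X(K)` is finite for every
finitely generated field extension `K/k`. -/
def Mordellic (k : Type u) [Field k] {X : Scheme.{u}}
    (f : X ⟶ Spec (CommRingCat.of k)) : Prop :=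
  ∀ (K : Type u) [Field K] [Algebra k K], FinGenExt k K → (kPoints K f).Finite

/-- A scheme `X` over a field `k` is pseudo-mordellic if it contains a nonempty
open subset which is mordellic. -/
def PseudoMordellic (k : Type u) [Field k] {X : Scheme.{u}}
    (f : X ⟶ Spec (CommRingCat.of k)) : Prop :=
  ∃ U : X.Opens, (U : Set X).Nonempty ∧ Mordellic k (U.ι ≫ f)

/-- A variety over a field: separated and of finite type. -/
def IsVariety {k : Type u} [Field k] {X : Scheme.{u}}
    (f : X ⟶ Spec (CommRingCat.of k)) : Prop :=
  LocallyOfFiniteType f ∧ QuasiCompact f ∧ IsSeparated f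

theorem product_pseudoMordellic_factor
    (k : Type u) [Field k] [CharZero k]
    (X₁ X₂ : Scheme.{u})
    (f₁ : X₁ ⟶ Spec (CommRingCat.of k)) (f₂ : X₂ ⟶ Spec (CommRingCat.of k))
    (hX₁ : IsVariety f₁) (hX₂ : IsVariety f₂)
    -- a mordellic nonempty open subset `U` of the product `X₁ ×ₖ X₂` …
    (U : (pullback f₁ f₂).Opens)
    (hUne : (U : Set (pullback f₁ f₂ : Scheme.{u})).Nonempty)
    (hU : Mordellic k (U.ι ≫ pullback.fst f₁ f₂ ≫ f₁))
    -- … containing a `k`-rational point of the product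
    (p : Spec (CommRingCat.of k) ⟶ pullback f₁ f₂)
    (hp : p ∈ kPoints k (pullback.fst f₁ f₂ ≫ f₁))
    (hpU : ∀ x, p.base x ∈ U) :
    PseudoMordellic k f₁ := by
  classical
  -- `Spec.map` of the identity algebra map is the identity
  have hid : Spec.map (CommRingCat.ofHom (algebraMap k k)) = 𝟙 _ := by
    have : CommRingCat.ofHom (algebraMap k k) = 𝟙 (CommRingCat.of k) := by
      ext x; simp [Algebra.algebraMap_self]
    rw [this, Spec.map_id]
  have hp' : p ≫ pullback.fst f₁ f₂ ≫ f₁ = 𝟙 _ := by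
    have h0 : p ≫ (pullback.fst f₁ f₂ ≫ f₁) = Spec.map (CommRingCat.ofHom (algebraMap k k)) := hp
    rw [hid] at h0
    simpa using h0
  -- the section of `pullback.fst` determined by `p`
  have hw : 𝟙 X₁ ≫ f₁ = (f₁ ≫ p ≫ pullback.snd f₁ f₂) ≫ f₂ := by
    have := pullback.condition (f := f₁) (g := f₂)
    calc 𝟙 X₁ ≫ f₁ = f₁ ≫ 𝟙 _ := by simp
      _ = f₁ ≫ p ≫ pullback.fst f₁ f₂ ≫ f₁ := by rw [hp']
      _ = (f₁ ≫ p ≫ pullback.snd f₁ f₂) ≫ f₂ := by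
          simp only [Category.assoc, ← this]
  set s : X₁ ⟶ pullback f₁ f₂ := pullback.lift (𝟙 X₁) (f₁ ≫ p ≫ pullback.snd f₁ f₂) hw with hs
  have hsfst : s ≫ pullback.fst f₁ f₂ = 𝟙 X₁ := pullback.lift_fst _ _ _
  -- `p` factors through `s`
  have hps : (p ≫ pullback.fst f₁ f₂) ≫ s = p := by
    apply pullback.hom_ext
    · simp only [Category.assoc, hsfst, Category.comp_id]
    · simp only [hs, Category.assoc, pullback.lift_snd]
      rw [reassoc_of% hp']
  refine ⟨s ⁻¹ᵁ U, ?_, ?_⟩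
  · -- nonempty: the image of `p` lies in `V`
    obtain ⟨x⟩ : Nonempty (Spec (CommRingCat.of k)) := ⟨⟨⊥, Ideal.bot_prime⟩⟩
    refine ⟨(p ≫ pullback.fst f₁ f₂).base x, ?_⟩
    show s.base _ ∈ U
    have : (((p ≫ pullback.fst f₁ f₂) ≫ s).base x) ∈ U := by
      rw [hps]; exact hpU x
    simpa using this
  · intro K _ _ hK
    -- inject K-points of V into K-points of U
    set V : X₁.Opens := s ⁻¹ᵁ U
    have hVs : ∀ q : Spec (CommRingCat.of K) ⟶ V,
        Set.range (q ≫ V.ι ≫ s).base ⊆ Set.range U.ι.base := by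
      intro q
      rintro _ ⟨x, rfl⟩
      rw [U.range_ι]
      have hy : V.ι.base (q.base x) ∈ V := by
        have h4 : V.ι.base (q.base x) ∈ Set.range V.ι.base := ⟨_, rfl⟩
        rwa [V.range_ι] at h4
      exact hy
    let Φ : (Spec (CommRingCat.of K) ⟶ V) → (Spec (CommRingCat.of K) ⟶ U) :=
      fun q => IsOpenImmersion.lift U.ι (q ≫ V.ι ≫ s) (hVs q)
    have hΦfac : ∀ q, Φ q ≫ U.ι = q ≫ V.ι ≫ s := fun q => IsOpenImmersion.lift_fac _ _ _
    have hΦinj : Function.Injective Φ := by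
      intro q₁ q₂ h
      have h1 : q₁ ≫ V.ι ≫ s = q₂ ≫ V.ι ≫ s := by
        rw [← hΦfac q₁, ← hΦfac q₂, h]
      have h3 := congrArg (fun t => t ≫ pullback.fst f₁ f₂) h1
      simp only [Category.assoc, hsfst, Category.comp_id] at h3
      exact (cancel_mono V.ι).mp h3
    have hmaps : ∀ q ∈ kPoints K (V.ι ≫ f₁),
        Φ q ∈ kPoints K (U.ι ≫ pullback.fst f₁ f₂ ≫ f₁) := by
      intro q hq
      show Φ q ≫ U.ι ≫ pullback.fst f₁ f₂ ≫ f₁ = _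
      rw [reassoc_of% (hΦfac q)]
      rw [reassoc_of% hsfst]
      exact hq
    have := hU K hK
    exact Set.Finite.of_finite_image (this.subset (by rintro _ ⟨q, hq, rfl⟩; exact hmaps q hq))
      (Function.Injective.injOn hΦinj)
end
end

section
/- Let V be a variety over a field k admitting a dominant, generically finite rational map V ⇢ ℙⁿ of degree d, and assume k is infinite (so ℙⁿ(k) is Zariski-dense). Then the set V_d = {p ∈ V closed point : [k(p) : k] ≤ d} is Zariski-dense in V. -/
open AlgebraicGeometry CategoryTheory Limits

universe u

noncomputable section

set_option maxHeartbeats 1000000 in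
set_option synthInstance.maxHeartbeats 400000 in
theorem core_lemma (k : Type u) [Field k] [Infinite k] (n d : ℕ)
    (A : Type u) [CommRing A] [Algebra k A] (hA : Algebra.FiniteType k A)
    (K : Type u) [Field K] [Algebra k K]
    [Algebra (FractionRing (MvPolynomial (Fin n) k)) K]
    [IsScalarTower k (FractionRing (MvPolynomial (Fin n) k)) K]
    [FiniteDimensional (FractionRing (MvPolynomial (Fin n) k)) K]
    (hdeg : Module.finrank (FractionRing (MvPolynomial (Fin n) k)) K = d)
    (ι : A →ₐ[k] K) :
    ∃ (F : Type u) (_ : Field F) (_ : Algebra k F),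
      FiniteDimensional k F ∧ Module.finrank k F ≤ d ∧ Nonempty (A →ₐ[k] F) := by
  classical
  set R₀ := MvPolynomial (Fin n) k with hR₀
  set L := FractionRing R₀ with hLdef
  letI : Algebra R₀ K := ((algebraMap L K).comp (algebraMap R₀ L)).toAlgebra
  haveI tRLK : IsScalarTower R₀ L K := IsScalarTower.of_algebraMap_eq' rfl
  haveI tkRK : IsScalarTower k R₀ K := IsScalarTower.of_algebraMap_eq fun c => by
    rw [IsScalarTower.algebraMap_apply R₀ L K, ← IsScalarTower.algebraMap_apply k R₀ L,
      ← IsScalarTower.algebraMap_apply k L K]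
  let e : Module.Basis (Fin d) L K := Module.finBasisOfFinrankEq L K hdeg
  obtain ⟨s, hs⟩ := hA
  set S : Finset K := ({1} : Finset K) ∪ s.image ι ∪
    (Finset.univ.image fun p : Fin d × Fin d => e p.1 * e p.2) with hSdef
  choose pr hnd using fun (x : K) (i : Fin d) =>
    IsLocalization.surj (M := nonZeroDivisors R₀) (S := L) (e.repr x i)
  set z : R₀ := S.prod (fun x => ∏ i : Fin d, ((pr x i).2 : R₀)) with hzdef
  have hz0 : z ≠ 0 := by
    rw [hzdef]
    rw [Finset.prod_ne_zero_iff]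
    intro x hx
    rw [Finset.prod_ne_zero_iff]
    intro i _
    exact mem_nonZeroDivisors_iff_ne_zero.mp (pr x i).2.2
  have hinjRK : Function.Injective (algebraMap R₀ K) := by
    rw [IsScalarTower.algebraMap_eq R₀ L K]
    exact (algebraMap L K).injective.comp (IsFractionRing.injective R₀ L)
  have hzK : IsUnit (algebraMap R₀ K z) := by
    rw [isUnit_iff_ne_zero]
    intro h
    exact hz0 (hinjRK (by rw [h, map_zero]))
  set R' := Localization.Away z with hR'
  set j : R' →+* K := Localization.awayLift (algebraMap R₀ K) z hzK with hj
  letI : Algebra R' K := j.toAlgebra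
  have hjcomp : ∀ r : R₀, j (algebraMap R₀ R' r) = algebraMap R₀ K r := fun r =>
    IsLocalization.Away.lift_eq z hzK r
  haveI tk'K : IsScalarTower k R' K := IsScalarTower.of_algebraMap_eq fun c => by
    show algebraMap k K c = j (algebraMap k R' c)
    rw [IsScalarTower.algebraMap_apply k R₀ R', hjcomp, ← IsScalarTower.algebraMap_apply k R₀ K]
  set M : Submodule R' K := Submodule.span R' (Set.range e) with hMdef
  have hmemM : ∀ x ∈ S, x ∈ M := by
    intro x hx
    rw [← e.sum_repr x]
    refine Submodule.sum_mem _ fun i _ => ?_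
    have hdvd : ((pr x i).2 : R₀) ∣ z := by
      refine dvd_trans (Finset.dvd_prod_of_mem (fun i => ((pr x i).2 : R₀)) (Finset.mem_univ i)) ?_
      exact Finset.dvd_prod_of_mem (fun x => ∏ i : Fin d, ((pr x i).2 : R₀)) hx
    obtain ⟨w, hw⟩ := hdvd
    have hu : IsUnit (algebraMap R₀ R' ((pr x i).2 : R₀)) := by
      have h1 : IsUnit (algebraMap R₀ R' z) := IsLocalization.Away.algebraMap_isUnit z
      have h2 : IsUnit (algebraMap R₀ R' ((pr x i).2 : R₀) * algebraMap R₀ R' w) := by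
        rw [← map_mul, ← hw]; exact h1
      exact isUnit_of_mul_isUnit_left h2
    have hden0 : algebraMap R₀ K ((pr x i).2 : R₀) ≠ 0 := fun h =>
      (mem_nonZeroDivisors_iff_ne_zero.mp (pr x i).2.2) (hinjRK (by rw [h, map_zero]))
    have hju : algebraMap R₀ K ((pr x i).2 : R₀) * j ↑hu.unit⁻¹ = 1 := by
      calc algebraMap R₀ K ((pr x i).2 : R₀) * j ↑hu.unit⁻¹
          = j (↑hu.unit * ↑hu.unit⁻¹) := by rw [map_mul, hu.unit_spec, hjcomp]
        _ = 1 := by rw [Units.mul_inv, map_one]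
    have h1 : algebraMap L K (e.repr x i) * algebraMap R₀ K ((pr x i).2 : R₀)
        = algebraMap R₀ K (pr x i).1 := by
      have h2 := congrArg (algebraMap L K) (hnd x i)
      rw [map_mul, ← IsScalarTower.algebraMap_apply R₀ L K,
        ← IsScalarTower.algebraMap_apply R₀ L K] at h2
      exact h2
    have hjr' : j (algebraMap R₀ R' (pr x i).1 * ↑hu.unit⁻¹) = algebraMap L K (e.repr x i) := by
      rw [map_mul, hjcomp, ← h1, mul_assoc, hju, mul_one]
    have hsm : (e.repr x i) • e i = (algebraMap R₀ R' (pr x i).1 * ↑hu.unit⁻¹) • e i := by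
      rw [Algebra.smul_def, Algebra.smul_def]
      show algebraMap L K _ * e i = j _ * e i
      rw [hjr']
    rw [hsm]
    exact Submodule.smul_mem _ _ (Submodule.subset_span ⟨i, rfl⟩)
  have hone : (1 : K) ∈ M := hmemM 1 (by simp [hSdef])
  have heM : ∀ i : Fin d, e i ∈ M := fun i => Submodule.subset_span ⟨i, rfl⟩
  have hmul : ∀ x y : K, x ∈ M → y ∈ M → x * y ∈ M := by
    have hee : ∀ i jj : Fin d, e i * e jj ∈ M := fun i jj => hmemM _ (by
      rw [hSdef]
      refine Finset.mem_union_right _ ?_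
      exact Finset.mem_image.mpr ⟨(i, jj), Finset.mem_univ _, rfl⟩)
    intro x y hx hy
    have hle : M * M ≤ M := by
      rw [hMdef, Submodule.span_mul_span]
      refine Submodule.span_le.mpr ?_
      rintro _ ⟨a, ⟨i, rfl⟩, b, ⟨jj, rfl⟩, rfl⟩
      exact hee i jj
    exact hle (Submodule.mul_mem_mul hx hy)
  set Asub : Subalgebra R' K := M.toSubalgebra hone hmul with hAsubdef
  set B : Subalgebra k K := Asub.restrictScalars k with hBdef
  have hmemB : ∀ x : K, x ∈ M → x ∈ B := fun x hx => hx
  have hιmem : ∀ a : A, ι a ∈ B := by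
    intro a
    have ha : a ∈ (⊤ : Subalgebra k A) := trivial
    rw [← hs] at ha
    have h3 : ι a ∈ (Algebra.adjoin k (↑s : Set A)).map ι := ⟨a, ha, rfl⟩
    rw [AlgHom.map_adjoin] at h3
    refine Algebra.adjoin_le ?_ h3
    rintro _ ⟨b, hb, rfl⟩
    refine hmemB _ (hmemM _ ?_)
    rw [hSdef]
    exact Finset.mem_union_left _ (Finset.mem_union_right _
      (Finset.mem_image.mpr ⟨b, hb, rfl⟩))
  -- choose a rational point where `z` does not vanish
  obtain ⟨a0, ha0⟩ : ∃ a0 : Fin n → k, MvPolynomial.eval a0 z ≠ 0 := by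
    by_contra hcon
    push_neg at hcon
    exact hz0 (MvPolynomial.funext fun x => by rw [hcon x, map_zero])
  set ev : R₀ →+* k := (MvPolynomial.eval a0 : R₀ →+* k) with hevdef
  have hevu : IsUnit (ev z) := isUnit_iff_ne_zero.mpr ha0
  set π : R' →+* k := Localization.awayLift ev z hevu with hπdef
  have hπcomp : ∀ r : R₀, π (algebraMap R₀ R' r) = ev r := fun r =>
    IsLocalization.Away.lift_eq z hevu r
  have hπk : ∀ c : k, π (algebraMap k R' c) = c := fun c => by
    rw [IsScalarTower.algebraMap_apply k R₀ R', hπcomp]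
    show MvPolynomial.eval a0 (MvPolynomial.C c) = c
    rw [MvPolynomial.eval_C]
  have hπsurj : Function.Surjective π := fun c => ⟨algebraMap k R' c, hπk c⟩
  set p : Ideal R' := RingHom.ker π with hpdef
  haveI hpmax : p.IsMaximal := RingHom.ker_isMaximal_of_surjective π hπsurj
  -- the algebra map `R' → B`
  have hjB : ∀ r : R', j r ∈ B := fun r => by
    refine hmemB _ ?_
    have h1 : j r = r • (1 : K) := by rw [Algebra.smul_def, mul_one]; rfl
    rw [h1]
    exact Submodule.smul_mem M r hone
  set algR'B : R' →+* B :=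
    { toFun := fun r => ⟨j r, hjB r⟩
      map_one' := Subtype.ext (map_one j)
      map_mul' := fun x y => Subtype.ext (map_mul j x y)
      map_zero' := Subtype.ext (map_zero j)
      map_add' := fun x y => Subtype.ext (map_add j x y) } with halgR'B
  letI : Algebra R' B := algR'B.toAlgebra
  have hcoesmul : ∀ (r : R') (b : B), ((r • b : B) : K) = j r * (b : K) := fun r b => rfl
  have heB : ∀ i : Fin d, e i ∈ B := fun i => hmemB _ (heM i)
  have hBspan : ∀ b : B, ∃ c : Fin d → R', ∑ i, c i • (⟨e i, heB i⟩ : B) = b := by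
    intro b
    have hb : (b : K) ∈ M := b.2
    rw [hMdef, Submodule.mem_span_range_iff_exists_fun] at hb
    obtain ⟨c, hc⟩ := hb
    refine ⟨c, Subtype.ext ?_⟩
    rw [← hc]
    push_cast
    rfl
  have htopB : Submodule.span R' (Set.range fun i : Fin d => (⟨e i, heB i⟩ : B)) = ⊤ := by
    rw [eq_top_iff]
    rintro b -
    rw [Submodule.mem_span_range_iff_exists_fun]
    exact hBspan b
  haveI : Module.Finite R' B :=
    ⟨by rw [← htopB]; exact Submodule.fg_span (Set.finite_range _)⟩
  haveI : Algebra.IsIntegral R' B := Algebra.IsIntegral.of_finite R' B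
  have hjinj : Function.Injective j := by
    rw [injective_iff_map_eq_zero]
    intro r hr
    obtain ⟨⟨a1, m⟩, hm⟩ := IsLocalization.surj (M := Submonoid.powers z) r
    have h2 : algebraMap R₀ K a1 = 0 := by
      have h3 := congrArg j hm
      rw [map_mul, hr, zero_mul, hjcomp] at h3
      exact h3.symm
    have ha1 : a1 = 0 := hinjRK (by rw [h2, map_zero])
    have hmu : IsUnit (algebraMap R₀ R' (m : R₀)) := IsLocalization.map_units R' m
    rw [ha1, map_zero] at hm
    exact (hmu.mul_left_eq_zero).mp hm
  have hkerB : RingHom.ker (algebraMap R' B) ≤ p := by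
    intro r hr
    rw [RingHom.mem_ker] at hr
    have h4 : j r = 0 := congrArg Subtype.val hr
    have h5 : r = 0 := hjinj (by rw [h4, map_zero])
    rw [h5]
    exact p.zero_mem
  obtain ⟨P, hPmax, hPcomap⟩ := Ideal.exists_ideal_over_maximal_of_isIntegral p hkerB
  set F := B ⧸ P with hFdef
  set qh : B →ₐ[k] F := Ideal.Quotient.mkₐ k P with hqhdef
  have halgkB : ∀ c : k, algebraMap R' B (algebraMap k R' c) = algebraMap k B c := by
    intro c
    refine Subtype.ext ?_
    exact (IsScalarTower.algebraMap_apply k R' K c).symm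
  have hsmul_factor : ∀ (r : R') (x : B), qh (r • x) = π r • qh x := by
    intro r x
    have hmem : algebraMap R' B r - algebraMap k B (π r) ∈ P := by
      have h6 : r - algebraMap k R' (π r) ∈ p := by
        rw [hpdef, RingHom.mem_ker, map_sub, hπk, sub_self]
      rw [← hPcomap] at h6
      have h7 : algebraMap R' B (r - algebraMap k R' (π r)) ∈ P := h6
      rw [map_sub, halgkB] at h7
      exact h7
    have h8 : r • x = (algebraMap R' B r) * x := Algebra.smul_def r x
    have h9 : qh (algebraMap R' B r) = algebraMap k F (π r) := by
      have h10 : qh (algebraMap R' B r - algebraMap k B (π r)) = 0 := by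
        rw [hqhdef, Ideal.Quotient.mkₐ_eq_mk]
        exact Ideal.Quotient.eq_zero_iff_mem.mpr hmem
      rw [map_sub, sub_eq_zero] at h10
      rw [h10, AlgHom.commutes]
    rw [h8, map_mul, h9, Algebra.smul_def]
  have hFtop : Submodule.span k (Set.range fun i : Fin d => qh ⟨e i, heB i⟩) = ⊤ := by
    rw [eq_top_iff]
    rintro f -
    obtain ⟨x, rfl⟩ := Ideal.Quotient.mkₐ_surjective k P f
    obtain ⟨c, hc⟩ := hBspan x
    rw [← hc, map_sum]
    refine Submodule.sum_mem _ fun i _ => ?_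
    rw [hsmul_factor]
    exact Submodule.smul_mem _ _ (Submodule.subset_span ⟨i, rfl⟩)
  haveI : FiniteDimensional k F :=
    ⟨by rw [← hFtop]; exact Submodule.fg_span (Set.finite_range _)⟩
  have hfr : Module.finrank k F ≤ d := by
    have h1 := finrank_span_le_card (R := k)
      (Set.range fun i : Fin d => qh ⟨e i, heB i⟩)
    rw [hFtop, finrank_top] at h1
    refine h1.trans ?_
    rw [Set.toFinset_range]
    exact (Finset.card_image_le).trans (by simp)
  haveI hFD : FiniteDimensional k F := inferInstance
  exact ⟨F, Ideal.Quotient.field P, Ideal.Quotient.algebra k, hFD, hfr,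
    ⟨qh.comp (AlgHom.codRestrict ι B hιmem)⟩⟩


theorem dense_bounded_degree_points_of_generically_finite
    (k : Type u) [Field k] [Infinite k] (n d : ℕ)
    (V : Scheme.{u}) (fV : V ⟶ Spec (CommRingCat.of k)) [IsIntegral V]
    (hV : IsVariety fV)
    -- `η` is the generic point, so `κ(η) = k(V)` is the function field of `V`
    (η : V) (hη : IsGenericPoint η Set.univ)
    -- the `k`-algebra structure of the function field induced by `fV`
    [Algebra k (V.residueField η)]
    (halg : Spec.map (CommRingCat.ofHom (algebraMap k (V.residueField η))) =
      V.fromSpecResidueField η ≫ fV)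
    -- a dominant, generically finite rational map `V ⇢ ℙⁿ` of degree `d`,
    -- i.e. a degree-`d` field extension `k(ℙⁿ) = k(x₁,…,xₙ) ⊆ k(V)` over `k`
    [Algebra (FractionRing (MvPolynomial (Fin n) k)) (V.residueField η)]
    [IsScalarTower k (FractionRing (MvPolynomial (Fin n) k)) (V.residueField η)]
    [FiniteDimensional (FractionRing (MvPolynomial (Fin n) k)) (V.residueField η)]
    (hdeg : Module.finrank (FractionRing (MvPolynomial (Fin n) k))
      (V.residueField η) = d) :
    -- the set `V_d` of closed points of residue degree at most `d` is dense
    Dense {x : V | ∃ (h : Type u) (_ : Field h) (_ : Algebra k h),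
      FiniteDimensional k h ∧ Module.finrank k h ≤ d ∧
      ∃ q ∈ kPoints h fV, q.base (IsLocalRing.closedPoint h) = x} := by
  classical
  rw [dense_iff_inter_open]
  intro W hW hWne
  obtain ⟨x0, hx0⟩ := hWne
  obtain ⟨U, hUaff, hx0U, hUle⟩ := TopologicalSpace.Opens.isBasis_iff_nbhd.mp
    (V.isBasis_affineOpens) (U := ⟨W, hW⟩) hx0
  have hUaff : IsAffineOpen U := hUaff
  haveI : LocallyOfFiniteType fV := hV.1
  -- the structure morphism of the affine chart, as a ring hom
  set σ : CommRingCat.of k ⟶ Γ(V, U) := Spec.preimage (hUaff.fromSpec ≫ fV) with hσdef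
  have hσ : Spec.map σ = hUaff.fromSpec ≫ fV := Spec.map_preimage _
  have hσft : RingHom.FiniteType σ.hom := by
    rw [← HasRingHomProperty.Spec_iff (P := @LocallyOfFiniteType), hσ]
    infer_instance
  letI : Algebra k ↥Γ(V, U) := σ.hom.toAlgebra
  -- the generic point lies in U
  have hηU : η ∈ U := by
    have hdense : Dense ({η} : Set V) := by
      rw [dense_iff_closure_eq]; exact hη
    obtain ⟨y, hy1, hy2⟩ := hdense.inter_open_nonempty U U.isOpen ⟨x0, hx0U⟩
    rw [Set.mem_singleton_iff] at hy2
    rwa [← hy2]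
  -- the inclusion of the function field
  have hrange : Set.range (V.fromSpecResidueField η).base ⊆ Set.range hUaff.fromSpec.base := by
    rw [V.range_fromSpecResidueField, hUaff.range_fromSpec]
    exact Set.singleton_subset_iff.mpr hηU
  set t : Spec (V.residueField η) ⟶ Spec Γ(V, U) :=
    IsOpenImmersion.lift hUaff.fromSpec (V.fromSpecResidueField η) hrange with htdef
  have ht : t ≫ hUaff.fromSpec = V.fromSpecResidueField η := IsOpenImmersion.lift_fac _ _ _
  set τ : Γ(V, U) ⟶ V.residueField η := Spec.preimage t with hτdef
  have hcompat : CommRingCat.ofHom (algebraMap k ↥(V.residueField η)) = σ ≫ τ := by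
    apply Spec.map_injective
    rw [Spec.map_comp, Spec.map_preimage, Spec.map_preimage, halg, ← ht, Category.assoc]
  set ιA : ↥Γ(V, U) →ₐ[k] ↥(V.residueField η) :=
    { toRingHom := τ.hom
      commutes' := fun c => by
        have h1 := congrArg (fun (f : CommRingCat.of k ⟶ V.residueField η) => f c) hcompat
        exact (by simpa using h1.symm : τ.hom (σ.hom c) = _) } with hιAdef
  obtain ⟨F, hF1, hF2, hF3, hF4, ⟨φ⟩⟩ := core_lemma k n d ↥Γ(V, U) hσft
    ↥(V.residueField η) hdeg ιA
  set φc : Γ(V, U) ⟶ CommRingCat.of F := CommRingCat.ofHom φ.toRingHom with hφcdef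
  set q : Spec (CommRingCat.of F) ⟶ V := Spec.map φc ≫ hUaff.fromSpec with hqdef
  have hq : q ≫ fV = Spec.map (CommRingCat.ofHom (algebraMap k F)) := by
    rw [hqdef, Category.assoc, ← hσ, ← Spec.map_comp]
    congr 1
    refine CommRingCat.hom_ext (RingHom.ext fun c => ?_)
    show φ (σ.hom c) = algebraMap k F c
    exact φ.commutes c
  refine ⟨q.base (IsLocalRing.closedPoint F), ?_, ?_⟩
  · have : q.base (IsLocalRing.closedPoint F) ∈ Set.range hUaff.fromSpec.base := by
      rw [hqdef]
      exact ⟨(Spec.map φc).base (IsLocalRing.closedPoint F), rfl⟩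
    rw [hUaff.range_fromSpec] at this
    exact hUle this
  · exact ⟨F, hF1, hF2, hF3, hF4, q, hq, rfl⟩
end
end
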